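/- Let R be a commutative ring, p a prime, and m, n positive integers such that m/gcd(m, n) is a power of p. Suppose R has bounded p^∞-torsion, i.e. there exists M ≥ 0 such that every r ∈ R with p^t·r = 0 for some t ≥ 0 satisfies p^M·r = 0. Then the quotient ring R[X]/(Φ_m(X)) has bounded (X^n − 1)^∞-torsion: there exists N ≥ 0 such that every element x of R[X]/(Φ_m(X)) with (X^n − 1)^t·x = 0 for some t ≥ 0 satisfies (X^n − 1)^N·x = 0. -/

import Mathlib

open Polynomial


/-- Bounded `p^∞`-torsion passes from `R` to `R[X]/(q)` for monic `q`. -/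
private lemma torsion_quot {R : Type*} [CommRing R] (p : ℕ) (q : R[X]) (hq : q.Monic) (M : ℕ)
    (hR : ∀ r : R, (∃ t : ℕ, (p : R) ^ t * r = 0) → (p : R) ^ M * r = 0) :
    ∀ x : R[X] ⧸ Ideal.span {q},
      (∃ t : ℕ, (p : R[X] ⧸ Ideal.span {q}) ^ t * x = 0) →
      (p : R[X] ⧸ Ideal.span {q}) ^ M * x = 0 := by
  rcases subsingleton_or_nontrivial R with hR' | hR'
  · intro x _
    obtain ⟨f, rfl⟩ := Ideal.Quotient.mk_surjective x
    rw [Subsingleton.elim f 0]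
    simp
  intro x ⟨t, ht⟩
  obtain ⟨f, rfl⟩ := Ideal.Quotient.mk_surjective x
  set r := f %ₘ q with hr
  have hfr : Ideal.Quotient.mk (Ideal.span {q}) f = Ideal.Quotient.mk (Ideal.span {q}) r := by
    rw [Ideal.Quotient.mk_eq_mk_iff_sub_mem, hr, modByMonic_eq_sub_mul_div f q]
    simp only [sub_sub_cancel]
    exact Ideal.mem_span_singleton.mpr ⟨f /ₘ q, rfl⟩
  have h0 : (C ((p : R) ^ t)) * r = 0 := by
    have hmem : (C ((p : R) ^ t)) * r ∈ Ideal.span {q} := by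
      rw [← Ideal.Quotient.eq_zero_iff_mem, map_mul, ← ht, hfr]
      congr 1
      simp [map_pow]
    have hdvd := Ideal.mem_span_singleton.mp hmem
    have hlt : degree (C ((p : R) ^ t) * r) < degree q := by
      calc degree (C ((p : R) ^ t) * r)
        ≤ degree (C ((p : R) ^ t)) + degree r := degree_mul_le _ _
      _ ≤ 0 + degree r := add_le_add degree_C_le le_rfl
      _ = degree r := by simp
        _ < degree q := degree_modByMonic_lt f hq
    rw [← (modByMonic_eq_self_iff hq).mpr hlt, (modByMonic_eq_zero_iff_dvd hq).mpr hdvd]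
  have h1 : (C ((p : R) ^ M)) * r = 0 := by
    ext i
    have := congrArg (fun g => coeff g i) h0
    simp only [coeff_C_mul, coeff_zero] at this ⊢
    exact hR _ ⟨t, this⟩
  have hmem : (C ((p : R) ^ M)) * r ∈ Ideal.span {q} := by rw [h1]; exact Ideal.zero_mem _
  rw [← Ideal.Quotient.eq_zero_iff_mem, map_mul, ← hfr] at hmem
  rw [← hmem]
  congr 1
  simp [map_pow]

private lemma cycl_zmod (p : ℕ) (hp : p.Prime) (β : ℕ) :
    cyclotomic (p ^ (β + 1)) (ZMod p) = (X - 1) ^ (p ^ (β + 1) - p ^ β) := by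
  haveI : Fact p.Prime := ⟨hp⟩
  have key := cyclotomic_prime_pow_mul_X_pow_sub_one (ZMod p) p β
  have h1 : (X : (ZMod p)[X]) ^ p ^ β - 1 = (X - 1) ^ p ^ β := by
    rw [sub_pow_char_pow (p := p)]; simp
  have h2 : (X : (ZMod p)[X]) ^ p ^ (β + 1) - 1 = (X - 1) ^ p ^ (β + 1) := by
    rw [sub_pow_char_pow (p := p)]; simp
  rw [h1, h2] at key
  have hle : p ^ β ≤ p ^ (β + 1) := Nat.pow_le_pow_right hp.pos (Nat.le_succ β)
  have h3 : (X - 1 : (ZMod p)[X]) ^ p ^ (β + 1)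
      = (X - 1) ^ (p ^ (β + 1) - p ^ β) * (X - 1) ^ p ^ β := by
    rw [← pow_add, Nat.sub_add_cancel hle]
  rw [h3] at key
  have hx : ((X : (ZMod p)[X]) - 1) ^ p ^ β ≠ 0 := by
    apply pow_ne_zero
    simpa using X_sub_C_ne_zero (1 : ZMod p)
  exact mul_right_cancel₀ hx key

private lemma hCy (p : ℕ) (hp : p.Prime) (β : ℕ) :
    (C (p : ℤ)) ∣ (X - 1) ^ (p ^ (β + 1) - p ^ β) - cyclotomic (p ^ (β + 1)) ℤ := by
  rw [C_dvd_iff_dvd_coeff]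
  intro i
  rw [← ZMod.intCast_zmod_eq_zero_iff_dvd]
  have hmap : ((X - 1 : ℤ[X]) ^ (p ^ (β + 1) - p ^ β) - cyclotomic (p ^ (β + 1)) ℤ).map
      (Int.castRingHom (ZMod p)) = 0 := by
    rw [Polynomial.map_sub, Polynomial.map_pow, Polynomial.map_sub, Polynomial.map_one,
      Polynomial.map_X, map_cyclotomic_int, cycl_zmod p hp β, sub_self]
  have h2 : (((X - 1 : ℤ[X]) ^ (p ^ (β + 1) - p ^ β) - cyclotomic (p ^ (β + 1)) ℤ).map
      (Int.castRingHom (ZMod p))).coeff i = 0 := by rw [hmap]; simp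
  rw [coeff_map] at h2
  simpa using h2

-- Φ_m ∣ Φ_{p^{β+1}}(X^n) over ℤ, when m = p^(β+1) * gcd(m,n)
private lemma factA (p : ℕ) (hp : p.Prime) (m n : ℕ) (hm : 0 < m) (hn : 0 < n) (β : ℕ)
    (hmd : m = p ^ (β + 1) * Nat.gcd m n) :
    cyclotomic m ℤ ∣ (cyclotomic (p ^ (β + 1)) ℤ).comp (X ^ n) := by
  haveI : Fact p.Prime := ⟨hp⟩
  set d := Nat.gcd m n with hd
  have hdn : d ∣ n := Nat.gcd_dvd_right m n
  -- the product identity composed with X^n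
  have key := congrArg (fun g => g.comp ((X : ℤ[X]) ^ n))
    (cyclotomic_prime_pow_mul_X_pow_sub_one ℤ p β)
  simp only [mul_comp, sub_comp, pow_comp, X_comp, one_comp, ← pow_mul] at key
  -- cyclotomic m ∣ X^(n * p^(β+1)) - 1
  have hm1 : cyclotomic m ℤ ∣ (X : ℤ[X]) ^ (n * p ^ (β + 1)) - 1 := by
    have h1 : cyclotomic m ℤ ∣ (X : ℤ[X]) ^ m - 1 := cyclotomic.dvd_X_pow_sub_one m ℤ
    have hmk : m ∣ n * p ^ (β + 1) := by
      obtain ⟨k, hk⟩ := hdn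
      exact ⟨k, by rw [hmd]; ring_nf; rw [hk]; ring⟩
    obtain ⟨k, hk⟩ := hmk
    refine h1.trans ?_
    have := sub_dvd_pow_sub_pow ((X : ℤ[X]) ^ m) 1 k
    simpa [← pow_mul, hk] using this
  rw [← key] at hm1
  have hprime : Prime (cyclotomic m ℤ) := (cyclotomic.irreducible hm).prime
  rcases hprime.2.2 _ _ hm1 with hF | hbad
  · exact hF
  · exfalso
    -- cyclotomic m ∤ X^(n*p^β) - 1
    have hζ := Complex.isPrimitiveRoot_exp m hm.ne'
    set ζ := Complex.exp (2 * Real.pi * Complex.I / m)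
    have hroot : (aeval ζ) (cyclotomic m ℤ) = 0 := by
      rw [aeval_def, eval₂_eq_eval_map, map_cyclotomic]
      exact (hζ.isRoot_cyclotomic hm).eq_zero
    obtain ⟨g, hg⟩ := hbad
    have : ζ ^ (n * p ^ β) - 1 = 0 := by
      have := congrArg (aeval ζ) hg
      simp only [map_sub, map_pow, map_mul, aeval_X, map_one, hroot, zero_mul] at this
      simpa using this
    have hdvd : m ∣ n * p ^ β := (hζ.pow_eq_one_iff_dvd _).mp (by linear_combination this)
    -- contradiction: p * d ∣ d
    have hpd_n : p * d ∣ n := by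
      have h2 : p ^ β * (p * d) ∣ p ^ β * n := by
        have : p ^ β * (p * d) = m := by rw [hmd]; ring
        rw [this, mul_comm (p ^ β) n]; exact hdvd
      exact (Nat.mul_dvd_mul_iff_left (Nat.pow_pos (n := β) hp.pos)).mp h2
    have hpd_m : p * d ∣ m := ⟨p ^ β, by rw [hmd]; ring⟩
    have hpd_d : p * d ∣ d := Nat.dvd_gcd hpd_m hpd_n
    have hd0 : 0 < d := Nat.gcd_pos_of_pos_left n hm
    have := Nat.le_of_dvd hd0 hpd_d
    nlinarith [hp.two_le]

/-- If `m / gcd(m,n)` is a power of the prime `p` and `R` has bounded `p^∞`-torsion, then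
`R[X]/(Φ_m)` has bounded `(X^n - 1)^∞`-torsion. -/
theorem stmt9 {R : Type*} [CommRing R] (p : ℕ) (hp : p.Prime) (m n : ℕ) (hm : 0 < m)
    (hn : 0 < n) (α : ℕ) (h : m / Nat.gcd m n = p ^ α)
    (hR : ∃ M : ℕ, ∀ r : R, (∃ t : ℕ, (p : R) ^ t * r = 0) → (p : R) ^ M * r = 0) :
    ∃ N : ℕ, ∀ x : R[X] ⧸ Ideal.span {cyclotomic m R},
      (∃ t : ℕ,
        (Ideal.Quotient.mk (Ideal.span {cyclotomic m R}) ((X : R[X]) ^ n - 1)) ^ t * x = 0) →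
      (Ideal.Quotient.mk (Ideal.span {cyclotomic m R}) ((X : R[X]) ^ n - 1)) ^ N * x = 0 := by
  haveI : Fact p.Prime := ⟨hp⟩
  obtain ⟨M, hM⟩ := hR
  set d := Nat.gcd m n with hd
  have hdm : d ∣ m := Nat.gcd_dvd_left m n
  have hdn : d ∣ n := Nat.gcd_dvd_right m n
  have hmd : m = p ^ α * d := by
    conv_lhs => rw [← Nat.div_mul_cancel hdm, h]
  set I := Ideal.span {cyclotomic m R} with hI
  set c := Ideal.Quotient.mk I ((X : R[X]) ^ n - 1) with hc
  rcases α with _ | β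
  · -- m ∣ n, so c = 0
    have hmn : m ∣ n := by
      rw [hmd, pow_zero, one_mul]; exact hdn
    have hc0 : c = 0 := by
      rw [hc, Ideal.Quotient.eq_zero_iff_mem, hI, Ideal.mem_span_singleton]
      refine (cyclotomic.dvd_X_pow_sub_one m R).trans ?_
      obtain ⟨k, hk⟩ := hmn
      have := sub_dvd_pow_sub_pow ((X : R[X]) ^ m) 1 k
      simpa [← pow_mul, hk] using this
    exact ⟨1, fun x _ => by rw [hc0]; simp⟩
  · -- the interesting case
    set e := p ^ (β + 1) - p ^ β with he
    set Fz := (cyclotomic (p ^ (β + 1)) ℤ).comp ((X : ℤ[X]) ^ n) with hFz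
    set FR := Fz.map (Int.castRingHom R) with hFR
    -- fact A, mapped
    have hA : cyclotomic m R ∣ FR := by
      have := factA p hp m n hm hn β hmd
      have h2 := Polynomial.map_dvd (Int.castRingHom R) this
      rwa [map_cyclotomic_int] at h2
    have hmkF : Ideal.Quotient.mk I FR = 0 := by
      rw [Ideal.Quotient.eq_zero_iff_mem, hI, Ideal.mem_span_singleton]; exact hA
    -- fact B : (X^n - 1) ∣ Fz - C p, over ℤ then over R then in quotient
    have hBz : ((X : ℤ[X]) ^ n - 1) ∣ Fz - C (p : ℤ) := by
      have hb0 : (X - C (1 : ℤ)) ∣ cyclotomic (p ^ (β + 1)) ℤ - C (p : ℤ) := by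
        have := X_sub_C_dvd_sub_C_eval (a := (1 : ℤ)) (p := cyclotomic (p ^ (β + 1)) ℤ)
        rwa [eval_one_cyclotomic_prime_pow] at this
      obtain ⟨g, hg⟩ := hb0
      refine ⟨g.comp ((X : ℤ[X]) ^ n), ?_⟩
      have := congrArg (fun q => q.comp ((X : ℤ[X]) ^ n)) hg
      simpa [sub_comp, mul_comp, X_comp, C_comp] using this
    have h4 : Ideal.Quotient.mk I (C ((Int.castRingHom R) (p : ℤ))) = (p : R[X] ⧸ I) := by
      push_cast
      simp [Polynomial.C_eq_natCast]
    have hcs : c = (Ideal.Quotient.mk I (X : R[X])) ^ n - 1 := by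
      rw [hc, map_sub, map_pow, map_one]
    have hB : c ∣ (p : R[X] ⧸ I) := by
      have h2 := Polynomial.map_dvd (Int.castRingHom R) hBz
      simp only [Polynomial.map_sub, Polynomial.map_pow, Polynomial.map_X, Polynomial.map_one,
        map_C] at h2
      rw [← hFR] at h2
      have h3 := _root_.map_dvd (Ideal.Quotient.mk I) h2
      simp only [map_sub, map_pow, map_one] at h3
      rw [hmkF, zero_sub] at h3
      rw [hcs, ← h4]
      exact dvd_neg.mp h3
    -- fact C : p ∣ c ^ e
    have hCz : (C (p : ℤ)) ∣ ((X : ℤ[X]) ^ n - 1) ^ e - Fz := by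
      obtain ⟨g, hg⟩ := hCy p hp β
      refine ⟨g.comp ((X : ℤ[X]) ^ n), ?_⟩
      have := congrArg (fun q => q.comp ((X : ℤ[X]) ^ n)) hg
      simpa [sub_comp, mul_comp, pow_comp, X_comp, C_comp, one_comp] using this
    have hC : (p : R[X] ⧸ I) ∣ c ^ e := by
      have h2 := Polynomial.map_dvd (Int.castRingHom R) hCz
      simp only [Polynomial.map_sub, Polynomial.map_pow, Polynomial.map_X, Polynomial.map_one,
        map_C] at h2
      rw [← hFR] at h2
      have h3 := _root_.map_dvd (Ideal.Quotient.mk I) h2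
      simp only [map_sub, map_pow, map_one] at h3
      rw [hmkF, sub_zero, h4] at h3
      rw [hcs]
      exact h3
    obtain ⟨w, hw⟩ := hB
    obtain ⟨u, hu⟩ := hC
    refine ⟨M * e, fun x ⟨t, ht⟩ => ?_⟩
    have hpt : (p : R[X] ⧸ I) ^ t * x = 0 := by
      calc (p : R[X] ⧸ I) ^ t * x = w ^ t * (c ^ t * x) := by rw [hw, mul_pow]; ring
        _ = 0 := by rw [ht, mul_zero]
    have hpM : (p : R[X] ⧸ I) ^ M * x = 0 :=
      torsion_quot p (cyclotomic m R) (cyclotomic.monic m R) M hM x ⟨t, hpt⟩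
    calc c ^ (M * e) * x = u ^ M * ((p : R[X] ⧸ I) ^ M * x) := by
          rw [mul_comm M e, pow_mul, hu, mul_pow]; ring
      _ = 0 := by rw [hpM, mul_zero]
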